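/- Let γ > 1 be real and H ≥ 1 an integer, and define e(H) = 1 − (γ − 1)/(γ^H − 1). Then the marginal decrease of the communication frequency 1/H satisfies 1/H − 1/(H+1) = 1/(H(H+1)), and the limiting marginal increase of the approximation factor satisfies lim_{γ→1⁺} (e(H+1) − e(H)) = 1/(H(H+1)); in particular both marginal effects decay at the rate 1/(H(H+1)) = O(1/H²) in H. (The paper's Remark 5: the marginal communication saving and the marginal approximation-error increase when moving from H to H+1 local forwards are of the same magnitude.) -/

import Mathlib

/-!
Statement 15 (Remark 5 of the paper): for `e(H) = 1 − (γ − 1)/(γ^H − 1)`,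
the marginal decrease of the communication frequency `1/H` satisfies
`1/H − 1/(H+1) = 1/(H(H+1))`, and the limiting marginal increase of the
approximation factor satisfies
`lim_{γ→1⁺} (e(H+1) − e(H)) = 1/(H(H+1))`; both marginal effects decay at the
rate `1/(H(H+1)) = O(1/H²)`.
-/

theorem fedattn_marginal_effects (γ : ℝ) (hγ : 1 < γ) (H : ℕ) (hH : 1 ≤ H) :
    (1 / (H : ℝ) - 1 / ((H : ℝ) + 1) = 1 / ((H : ℝ) * ((H : ℝ) + 1))) ∧
    Filter.Tendsto
      (fun g : ℝ => (1 - (g - 1) / (g ^ (H + 1) - 1)) - (1 - (g - 1) / (g ^ H - 1)))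
      (nhdsWithin 1 (Set.Ioi 1)) (nhds (1 / ((H : ℝ) * ((H : ℝ) + 1)))) := by
  have hHR : (0 : ℝ) < (H : ℝ) := by exact_mod_cast hH
  have heq : 1 / (H : ℝ) - 1 / ((H : ℝ) + 1) = 1 / ((H : ℝ) * ((H : ℝ) + 1)) := by
    field_simp
    ring
  refine ⟨heq, ?_⟩
  -- congruence with 1/∑_{i<H} g^i - 1/∑_{i<H+1} g^i on Ioi 1
  have key : ∀ g ∈ Set.Ioi (1:ℝ), ∀ n : ℕ,
      (g - 1) / (g ^ n - 1) = 1 / (∑ i ∈ Finset.range n, g ^ i) := by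
    intro g hg n
    have hg1 : g - 1 ≠ 0 := by simp only [Set.mem_Ioi] at hg; linarith
    have hmul : (∑ i ∈ Finset.range n, g ^ i) * (g - 1) = g ^ n - 1 := geom_sum_mul g n
    rw [← hmul, mul_comm]
    rw [div_mul_eq_div_div, div_self hg1]
  have hcongr : Set.EqOn
      (fun g : ℝ => (1 - (g - 1) / (g ^ (H + 1) - 1)) - (1 - (g - 1) / (g ^ H - 1)))
      (fun g : ℝ => (1 / (∑ i ∈ Finset.range H, g ^ i)) - (1 / (∑ i ∈ Finset.range (H+1), g ^ i)))
      (Set.Ioi 1) := by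
    intro g hg
    simp only
    rw [key g hg H, key g hg (H+1)]
    ring
  refine Filter.Tendsto.congr' (Filter.eventuallyEq_of_mem self_mem_nhdsWithin
    fun g hg => (hcongr hg).symm) ?_
  have hlim : Filter.Tendsto
      (fun g : ℝ => (1 / (∑ i ∈ Finset.range H, g ^ i)) - (1 / (∑ i ∈ Finset.range (H+1), g ^ i)))
      (nhds 1) (nhds (1 / ((H : ℝ) * ((H : ℝ) + 1)))) := by
    have c1 : Continuous (fun g : ℝ => ∑ i ∈ Finset.range H, g ^ i) := by
      continuity
    have c2 : Continuous (fun g : ℝ => ∑ i ∈ Finset.range (H+1), g ^ i) := by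
      continuity
    have h1 : (∑ i ∈ Finset.range H, (1:ℝ) ^ i) = (H : ℝ) := by simp
    have h2 : (∑ i ∈ Finset.range (H+1), (1:ℝ) ^ i) = (H : ℝ) + 1 := by
      simp
    have t1 : Filter.Tendsto (fun g : ℝ => 1 / (∑ i ∈ Finset.range H, g ^ i))
        (nhds 1) (nhds (1 / (H : ℝ))) := by
      refine Filter.Tendsto.div tendsto_const_nhds ?_ (by positivity)
      have := c1.tendsto 1
      rwa [h1] at this
    have t2 : Filter.Tendsto (fun g : ℝ => 1 / (∑ i ∈ Finset.range (H+1), g ^ i))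
        (nhds 1) (nhds (1 / ((H : ℝ) + 1))) := by
      refine Filter.Tendsto.div tendsto_const_nhds ?_ (by positivity)
      have := c2.tendsto 1
      rwa [h2] at this
    have := t1.sub t2
    rwa [heq] at this
  exact hlim.mono_left nhdsWithin_le_nhds
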